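/- arXiv:2212.12888 — 6 statements merged into one kernel-verified Lean document; each statement's English description precedes it below -/
import Mathlib

section
/- Let S ≥ 2 and N ≥ 2 be integers. Then Σ_{k=1}^{N} C(N−1, k−1) · (g(S,k) + (S−1)·f(S,k)) = S^{N−1}, where C(·,·) is the binomial coefficient. (Equivalently, the total number of subfiles of any fixed file appearing across the query sets of all S databases in the PIR scheme is S^{N−1}, so the user recovers all S^{N−1} subfiles of the demanded file.) -/
/-- Pair `(g S k, f S k)` defined by the recurrence:
`g(S,1)=1, f(S,1)=0`, and for `k ≥ 2`,
`g(S,k)=(S−1)·f(S,k−1)`, `f(S,k)=(S−2)·f(S,k−1)+g(S,k−1)`. -/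
def gfAux (S : ℕ) : ℕ → ℤ × ℤ
  | 0 => (0, 0)
  | 1 => (1, 0)
  | (k+2) => (((S : ℤ) - 1) * (gfAux S (k+1)).2,
              ((S : ℤ) - 2) * (gfAux S (k+1)).2 + (gfAux S (k+1)).1)

def g (S k : ℕ) : ℤ := (gfAux S k).1
def f (S k : ℕ) : ℤ := (gfAux S k).2

/-- `φ_s(S,k)`: `g(S,k)` if `s = 1`, else `f(S,k)`. -/
def phi (S s k : ℕ) : ℤ := if s = 1 then g S k else f S k

/-- `ψ_s(S,k) = ⌈(k(N−1)/N)·φ_s(S,k)⌉`. -/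
def psi (S N s k : ℕ) : ℤ := ⌈((k : ℚ) * ((N : ℚ) - 1) / (N : ℚ)) * ((phi S s k : ℚ))⌉

/-- `q = Σ_{k=1}^{N} Σ_{s=1}^{S} C(N,k)·ψ_s(S,k)`. -/
def qTotal (S N : ℕ) : ℤ :=
  ∑ k ∈ Finset.Icc 1 N, ∑ s ∈ Finset.Icc 1 S, (N.choose k : ℤ) * psi S N s k

lemma h_eq (S k : ℕ) : g S (k+1) + ((S : ℤ) - 1) * f S (k+1) = ((S : ℤ) - 1) ^ k := by
  induction k with
  | zero => simp [g, f, gfAux]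
  | succ n ih =>
    have hg : g S (n+2) = ((S : ℤ) - 1) * f S (n+1) := rfl
    have hf : f S (n+2) = ((S : ℤ) - 2) * f S (n+1) + g S (n+1) := rfl
    rw [hg, hf, pow_succ, ← ih]; ring

theorem total_subfiles_of_fixed_file (S N : ℕ) (hS : 2 ≤ S) (hN : 2 ≤ N) :
    ∑ k ∈ Finset.Icc 1 N,
        ((N - 1).choose (k - 1) : ℤ) * (g S k + ((S : ℤ) - 1) * f S k)
      = (S : ℤ) ^ (N - 1) := by
  rw [← Finset.Ico_add_one_right_eq_Icc, Finset.sum_Ico_eq_sum_range]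
  have hN1 : N + 1 - 1 = N := by omega
  rw [hN1]
  have : ∀ i ∈ Finset.range N,
      (((N - 1).choose (1 + i - 1) : ℤ)) * (g S (1 + i) + ((S : ℤ) - 1) * f S (1 + i))
      = ((S : ℤ) - 1) ^ i * 1 ^ (N - 1 - i) * ((N-1).choose i : ℤ) := by
    intro i hi
    have : 1 + i = i + 1 := by omega
    rw [this]
    simp [h_eq, mul_comm]
  rw [Finset.sum_congr rfl this]
  have hr : N = (N - 1) + 1 := by omega
  rw [hr]
  have h2 : N - 1 + 1 - 1 = N - 1 := by omega
  rw [h2, ← add_pow]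
  norm_num
end

section
/- Let S ≥ 2 and N ≥ 2 be integers. Then Σ_{k=1}^{N} C(N,k) · (g(S,k) + (S−1)·f(S,k)) = (S^N − 1)/(S − 1) = Σ_{i=0}^{N−1} S^{i}, where C(·,·) is the binomial coefficient. (Consequently the PIR scheme of Section 2 downloads 1 + S + ⋯ + S^{N−1} subfiles in total, achieving the optimal rate 1 + 1/S + ⋯ + 1/S^{N−1}.) -/
lemma h_closed (S : ℕ) : ∀ k, g S (k+1) + ((S:ℤ)-1) * f S (k+1) = ((S:ℤ)-1)^k := by
  intro k
  induction k with
  | zero => simp [g, f, gfAux]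
  | succ n ih =>
    have h2 : g S (n+2) + ((S:ℤ)-1) * f S (n+2)
        = ((S:ℤ)-1) * (g S (n+1) + ((S:ℤ)-1) * f S (n+1)) := by
      simp only [g, f, gfAux]; ring
    rw [h2, ih]; ring

theorem total_queries_pir (S N : ℕ) (hS : 2 ≤ S) (hN : 2 ≤ N) :
    (∑ k ∈ Finset.Icc 1 N, (N.choose k : ℤ) * (g S k + ((S : ℤ) - 1) * f S k)
      = ∑ i ∈ Finset.range N, (S : ℤ) ^ i) ∧
    (((S : ℤ) - 1) * ∑ i ∈ Finset.range N, (S : ℤ) ^ i = (S : ℤ) ^ N - 1) := by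
  have hx : ((S:ℤ) - 1) ≠ 0 := by
    have : (2:ℤ) ≤ (S:ℤ) := by exact_mod_cast hS
    omega
  have geom : ((S:ℤ)-1) * ∑ i ∈ Finset.range N, (S:ℤ)^i = (S:ℤ)^N - 1 := by
    rw [mul_comm, geom_sum_mul]
  refine ⟨?_, geom⟩
  apply mul_left_cancel₀ hx
  rw [geom, Finset.mul_sum]
  have step : ∀ k ∈ Finset.Icc 1 N,
      ((S:ℤ)-1) * ((N.choose k : ℤ) * (g S k + ((S:ℤ)-1) * f S k))
        = (N.choose k : ℤ) * ((S:ℤ)-1)^k := by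
    intro k hk
    simp only [Finset.mem_Icc] at hk
    obtain ⟨j, rfl⟩ : ∃ j, k = j + 1 := ⟨k-1, by omega⟩
    rw [h_closed]; ring
  rw [Finset.sum_congr rfl step]
  have hbin : ∑ k ∈ Finset.range (N+1), (N.choose k : ℤ) * ((S:ℤ)-1)^k = (S:ℤ)^N := by
    have h := add_pow ((S:ℤ)-1) 1 N
    simp only [one_pow, mul_one, sub_add_cancel] at h
    rw [h]
    exact Finset.sum_congr rfl (fun k _ => by ring)
  have hins : Finset.range (N+1) = insert 0 (Finset.Icc 1 N) := by
    ext x; simp [Finset.mem_range, Finset.mem_Icc]; omega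
  rw [hins, Finset.sum_insert (by simp)] at hbin
  simp only [Nat.choose_zero_right, Nat.cast_one, pow_zero, mul_one, one_mul] at hbin
  omega
end

section
/- Let S ≥ 2 and N ≥ 2 be integers. Then for every s ∈ {1,…,S} and every k ∈ {1,…,N}, C(N,k)·ψ_s(S,k) − (N−1)·C(N−1,k−1)·φ_s(S,k) ≤ C(N−1,k−1)·ψ_s(S,k), where C(·,·) is the binomial coefficient. (This is the correctness condition F_s^{d,d}(k) ≤ C(N−1,k−1)·ψ_s(S,k) of Function 1.) -/
lemma gfAux_nonneg (S : ℕ) (hS : 2 ≤ S) : ∀ k, 0 ≤ (gfAux S k).1 ∧ 0 ≤ (gfAux S k).2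
  | 0 => by simp [gfAux]
  | 1 => by simp [gfAux]
  | (k+2) => by
    obtain ⟨h1, h2⟩ := gfAux_nonneg S hS (k+1)
    have hS' : (2:ℤ) ≤ S := by exact_mod_cast hS
    refine ⟨?_, ?_⟩
    · simp only [gfAux]; nlinarith
    · simp only [gfAux]; nlinarith

lemma phi_nonneg (S s k : ℕ) (hS : 2 ≤ S) : 0 ≤ phi S s k := by
  unfold phi g f
  split
  · exact (gfAux_nonneg S hS k).1
  · exact (gfAux_nonneg S hS k).2

theorem F_dd_le (S N : ℕ) (hS : 2 ≤ S) (hN : 2 ≤ N)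
    (s : ℕ) (hs : s ∈ Finset.Icc 1 S) (k : ℕ) (hk : k ∈ Finset.Icc 1 N) :
    (N.choose k : ℤ) * psi S N s k
        - ((N : ℤ) - 1) * ((N - 1).choose (k - 1) : ℤ) * phi S s k
      ≤ ((N - 1).choose (k - 1) : ℤ) * psi S N s k := by
  simp only [Finset.mem_Icc] at hs hk
  obtain ⟨hk1, hkN⟩ := hk
  obtain ⟨j, rfl⟩ : ∃ j, k = j + 1 := ⟨k - 1, (Nat.succ_pred_eq_of_pos hk1).symm⟩
  have hφ : 0 ≤ phi S s (j+1) := phi_nonneg S s (j+1) hS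
  have hφq : (0:ℚ) ≤ (phi S s (j+1) : ℚ) := by exact_mod_cast hφ
  have hNq : (0:ℚ) < (N:ℚ) := by positivity
  have hN1q : (1:ℚ) ≤ (N:ℚ) := by exact_mod_cast Nat.one_le_of_lt hN
  have hψ0 : 0 ≤ psi S N s (j+1) := by
    apply Int.ceil_nonneg
    have : (0:ℚ) ≤ ((j:ℚ)+1) * ((N:ℚ) - 1) / (N:ℚ) := by
      apply div_nonneg _ hNq.le
      apply mul_nonneg (by positivity)
      linarith
    have := mul_nonneg this hφq
    simpa using this
  have hψle : psi S N s (j+1) ≤ ((j:ℤ)+1) * phi S s (j+1) := by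
    apply Int.ceil_le.mpr
    push_cast
    rw [div_mul_eq_mul_div, div_le_iff₀ hNq]
    nlinarith
  set ψ := psi S N s (j+1) with hψdef
  set φ := phi S s (j+1) with hφdef
  have hkNz : (j:ℤ) + 1 ≤ (N:ℤ) := by exact_mod_cast hkN
  have key : ((N:ℤ) - ((j:ℤ)+1)) * ψ ≤ ((j:ℤ)+1) * (((N:ℤ)-1) * φ) := by
    calc ((N:ℤ) - ((j:ℤ)+1)) * ψ ≤ ((N:ℤ) - 1) * ψ := by
          apply mul_le_mul_of_nonneg_right _ hψ0
          linarith
      _ ≤ ((N:ℤ) - 1) * (((j:ℤ)+1) * φ) := by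
          apply mul_le_mul_of_nonneg_left hψle
          have : (2:ℤ) ≤ (N:ℤ) := by exact_mod_cast hN
          linarith
      _ = ((j:ℤ)+1) * (((N:ℤ)-1) * φ) := by ring
  have hbinN : (j + 1) * N.choose (j+1) = N * ((N-1).choose j) := by
    obtain ⟨m, rfl⟩ : ∃ m, N = m + 1 := ⟨N - 1, (Nat.succ_pred_eq_of_pos (by omega)).symm⟩
    simp only [Nat.add_sub_cancel]
    rw [mul_comm (j+1)]
    exact (Nat.add_one_mul_choose_eq m j).symm
  have hbin : ((j:ℤ) + 1) * (N.choose (j+1) : ℤ) = (N:ℤ) * (((N-1).choose j : ℕ) : ℤ) := by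
    exact_mod_cast hbinN
  have hC0 : (0:ℤ) ≤ (((N-1).choose j : ℕ) : ℤ) := Int.natCast_nonneg _
  have hjpos : (0:ℤ) < (j:ℤ) + 1 := by positivity
  rw [Nat.add_sub_cancel]
  apply le_of_mul_le_mul_left _ hjpos
  have hkey' := mul_le_mul_of_nonneg_left key hC0
  nlinarith [hkey', hbin]
end

section
/- Let S ≥ 2 and N ≥ 2 be integers and let q = Σ_{k=1}^{N} Σ_{s=1}^{S} C(N,k)·ψ_s(S,k). Then q ≥ (N−1)·S^{N−1}; that is, the quantity H = q − (N−1)·S^{N−1} used in the placement phase of the proposed cache-aided MuPIR scheme is nonnegative. -/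
lemma gf_key (S : ℕ) : ∀ k : ℕ, g S (k+1) + ((S:ℤ)-1) * f S (k+1) = ((S:ℤ)-1)^k := by
  intro k
  induction k with
  | zero => simp [g, f, gfAux]
  | succ n ih =>
    simp only [g, f, gfAux] at ih ⊢
    rw [pow_succ]
    linear_combination ((S:ℤ)-1) * ih

lemma phi_sum (S k : ℕ) (hS : 2 ≤ S) :
    ∑ s ∈ Finset.Icc 1 S, phi S s k = g S k + ((S:ℤ)-1) * f S k := by
  have h1 : Finset.Icc 1 S = insert 1 (Finset.Icc 2 S) := by
    ext x; simp only [Finset.mem_Icc, Finset.mem_insert]; omega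
  rw [h1, Finset.sum_insert (by simp)]
  have h2 : ∑ s ∈ Finset.Icc 2 S, phi S s k = (Finset.Icc 2 S).card • f S k := by
    rw [← Finset.sum_const]
    apply Finset.sum_congr rfl
    intro s hs
    have : s ≠ 1 := by simp only [Finset.mem_Icc] at hs; omega
    simp [phi, this]
  rw [h2, Nat.card_Icc]
  have hcard : S + 1 - 2 = S - 1 := by omega
  rw [hcard, nsmul_eq_mul]
  have : ((S - 1 : ℕ) : ℤ) = (S : ℤ) - 1 := by push_cast [Nat.one_le_iff_ne_zero.mpr (by omega : S ≠ 0)]; ring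
  rw [this]
  simp [phi]

lemma binom_id (N : ℕ) (hN : 1 ≤ N) (x : ℤ) :
    ∑ k ∈ Finset.Icc 1 N, (k:ℤ) * (N.choose k) * x^(k-1) = N * (x+1)^(N-1) := by
  have hIcc : Finset.Icc 1 N = Finset.Ico 1 (N+1) := by
    ext x; simp [Nat.lt_succ_iff]
  rw [hIcc, Finset.sum_Ico_eq_sum_range]
  simp only [Nat.add_sub_cancel]
  have step : ∀ i ∈ Finset.range N, ((1+i:ℕ):ℤ) * (N.choose (1+i)) * x^(1+i-1)
      = (N:ℤ) * (((N-1).choose i) * x^i) := by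
    intro i _
    have h : N * ((N-1).choose i) = N.choose (1+i) * (1+i) := by
      have := Nat.add_one_mul_choose_eq (N-1) i
      rw [Nat.sub_add_cancel hN] at this
      rw [this, Nat.add_comm 1 i]
    have h' : ((N:ℤ)) * ((N-1).choose i) = (N.choose (1+i) : ℤ) * ((1+i:ℕ):ℤ) := by
      exact_mod_cast congrArg (Nat.cast : ℕ → ℤ) h
    rw [Nat.add_sub_cancel_left]
    linear_combination -x^i * h'
  rw [Finset.sum_congr rfl step, ← Finset.mul_sum]
  congr 1
  have hb := add_pow x 1 (N-1)
  simp only [one_pow, mul_one] at hb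
  rw [Nat.sub_add_cancel hN] at hb
  rw [hb]
  exact Finset.sum_congr rfl fun i _ => mul_comm _ _

lemma phi_sum_pow (S k : ℕ) (hS : 2 ≤ S) (hk : 1 ≤ k) :
    ∑ s ∈ Finset.Icc 1 S, phi S s k = ((S:ℤ)-1)^(k-1) := by
  rw [phi_sum S k hS]
  obtain ⟨m, rfl⟩ : ∃ m, k = m+1 := ⟨k-1, by omega⟩
  rw [gf_key]
  simp

theorem H_nonneg (S N : ℕ) (hS : 2 ≤ S) (hN : 2 ≤ N) :
    ((N : ℤ) - 1) * (S : ℤ) ^ (N - 1) ≤ qTotal S N := by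
  have hNne : (N:ℚ) ≠ 0 := Nat.cast_ne_zero.mpr (by omega)
  rw [← @Int.cast_le ℚ]
  have hle : ∑ k ∈ Finset.Icc 1 N, ∑ s ∈ Finset.Icc 1 S,
      (N.choose k : ℚ) * (((k:ℚ) * ((N:ℚ)-1) / (N:ℚ)) * ((phi S s k : ℤ) : ℚ))
      ≤ ((qTotal S N : ℤ) : ℚ) := by
    rw [qTotal]
    push_cast
    apply Finset.sum_le_sum; intro k _
    apply Finset.sum_le_sum; intro s _
    have h := Int.le_ceil (((k:ℚ) * ((N:ℚ)-1) / (N:ℚ)) * ((phi S s k : ℤ) : ℚ))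
    calc (N.choose k : ℚ) * (((k:ℚ) * ((N:ℚ)-1) / (N:ℚ)) * ((phi S s k : ℤ) : ℚ))
        ≤ (N.choose k : ℚ) * ((psi S N s k : ℤ) : ℚ) := by
          apply mul_le_mul_of_nonneg_left _ (by positivity)
          exact h
      _ = (N.choose k : ℚ) * ((psi S N s k : ℤ) : ℚ) := rfl
  refine le_trans (le_of_eq ?_) hle
  have hB : ∑ k ∈ Finset.Icc 1 N, (k:ℚ)*(N.choose k:ℚ)*((S:ℚ)-1)^(k-1)
      = (N:ℚ)*(S:ℚ)^(N-1) := by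
    have h := binom_id N (by omega) ((S:ℤ)-1)
    rw [sub_add_cancel] at h
    exact_mod_cast h
  push_cast
  calc ((N:ℚ)-1)*(S:ℚ)^(N-1)
      = ((N:ℚ)-1)/(N:ℚ) * ((N:ℚ)*(S:ℚ)^(N-1)) := by field_simp
    _ = ((N:ℚ)-1)/(N:ℚ) * ∑ k ∈ Finset.Icc 1 N, (k:ℚ)*(N.choose k:ℚ)*((S:ℚ)-1)^(k-1) := by
        rw [hB]
    _ = ∑ k ∈ Finset.Icc 1 N, (N.choose k:ℚ) * (((k:ℚ)*((N:ℚ)-1)/(N:ℚ)) * ((S:ℚ)-1)^(k-1)) := by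
        rw [Finset.mul_sum]
        apply Finset.sum_congr rfl; intro k _
        field_simp
    _ = ∑ k ∈ Finset.Icc 1 N, ∑ s ∈ Finset.Icc 1 S,
        (N.choose k : ℚ) * (((k:ℚ) * ((N:ℚ)-1) / (N:ℚ)) * ((phi S s k : ℤ) : ℚ)) := by
        apply Finset.sum_congr rfl; intro k hk
        have hk1 : 1 ≤ k := (Finset.mem_Icc.mp hk).1
        have hsum : ∑ s ∈ Finset.Icc 1 S, ((phi S s k : ℤ) : ℚ) = ((S:ℚ)-1)^(k-1) := by
          have := phi_sum_pow S k hS hk1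
          exact_mod_cast congrArg (Int.cast : ℤ → ℚ) (by push_cast [this]; rfl : (∑ s ∈ Finset.Icc 1 S, phi S s k : ℤ) = ((S:ℤ)-1)^(k-1))
        rw [← Finset.mul_sum, ← Finset.mul_sum, hsum]
end

section
/- (Lemma 4.1) Let S ≥ 2 and N ≥ 2 be integers and let q = Σ_{k=1}^{N} Σ_{s=1}^{S} C(N,k)·ψ_s(S,k). Then N·S^{N−1} − q > 0. -/
lemma gf_nonneg {S : ℕ} (hS : 2 ≤ S) : ∀ k, 0 ≤ (gfAux S k).1 ∧ 0 ≤ (gfAux S k).2 := by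
  have h1 : (0:ℤ) ≤ (S:ℤ) - 1 := by
    have : (2:ℤ) ≤ S := by exact_mod_cast hS
    linarith
  have h2 : (0:ℤ) ≤ (S:ℤ) - 2 := by
    have : (2:ℤ) ≤ S := by exact_mod_cast hS
    linarith
  intro k
  induction k with
  | zero => simp [gfAux]
  | succ n ih =>
    match n, ih with
    | 0, _ => simp [gfAux]
    | (m+1), ih =>
      simp only [gfAux]
      constructor
      · exact mul_nonneg h1 ih.2
      · exact add_nonneg (mul_nonneg h2 ih.2) ih.1

lemma gf_sum {S : ℕ} : ∀ k, (gfAux S (k+1)).1 + ((S:ℤ)-1) * (gfAux S (k+1)).2 = ((S:ℤ)-1)^k := by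
  intro k
  induction k with
  | zero => simp [gfAux]
  | succ n ih =>
    show (gfAux S (n+2)).1 + ((S:ℤ)-1) * (gfAux S (n+2)).2 = _
    simp only [gfAux]
    rw [pow_succ, ← ih]
    ring

lemma psi_eq (S N s k : ℕ) (hN : 0 < N) :
    psi S N s k = (k : ℤ) * phi S s k - ((k : ℤ) * phi S s k) / N := by
  set a : ℤ := (k : ℤ) * phi S s k with ha
  have hNQ : (N : ℚ) ≠ 0 := by positivity
  have : ((k : ℚ) * ((N : ℚ) - 1) / (N : ℚ)) * ((phi S s k : ℚ))
      = -((a : ℚ) / (N : ℚ)) + (a : ℚ) := by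
    push_cast [ha]
    field_simp
    ring
  rw [psi, this, Int.ceil_add_intCast, Int.ceil_neg, Rat.floor_intCast_div_natCast]
  ring

lemma binom_deriv (N : ℕ) (hN : 1 ≤ N) (x : ℤ) :
    ∑ k ∈ Finset.Icc 1 N, (N.choose k : ℤ) * k * x^(k-1) = N * (x+1)^(N-1) := by
  have h : Finset.Icc 1 N = Finset.map ⟨fun j => j + 1, add_left_injective 1⟩ (Finset.range N) := by
    ext k
    simp only [Finset.mem_Icc, Finset.mem_map, Finset.mem_range, Function.Embedding.coeFn_mk]
    constructor
    · intro ⟨h1, h2⟩; exact ⟨k - 1, by omega, by omega⟩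
    · rintro ⟨j, hj, rfl⟩; omega
  rw [h, Finset.sum_map]
  simp only [Function.Embedding.coeFn_mk, Nat.add_sub_cancel]
  have key : ∀ j, (N.choose (j+1) : ℤ) * (j+1) = N * ((N-1).choose j) := by
    intro j
    have := Nat.add_one_mul_choose_eq (N-1) j
    have hN1 : N - 1 + 1 = N := by omega
    simp only [Nat.succ_eq_add_one, hN1] at this
    exact_mod_cast this.symm
  calc ∑ j ∈ Finset.range N, (N.choose (j+1) : ℤ) * (j+1) * x^j
      = ∑ j ∈ Finset.range N, (N:ℤ) * ((N-1).choose j * x^j) := by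
        apply Finset.sum_congr rfl
        intro j _
        rw [key j]; ring
    _ = N * ∑ j ∈ Finset.range N, ((N-1).choose j : ℤ) * x^j := by
        rw [Finset.mul_sum]
    _ = N * (x+1)^(N-1) := by
        congr 1
        have := add_pow x (1:ℤ) (N-1)
        simp only [one_pow, mul_one] at this
        rw [this]
        have : N - 1 + 1 = N := by omega
        rw [this]
        apply Finset.sum_congr rfl
        intro j _
        ring

theorem lemma4_1 (S N : ℕ) (hS : 2 ≤ S) (hN : 2 ≤ N) :
    0 < (N : ℤ) * (S : ℤ) ^ (N - 1) - qTotal S N := by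
  have hN0 : 0 < N := by omega
  have hphi_nonneg : ∀ s k, 0 ≤ phi S s k := by
    intro s k
    unfold phi g f
    split <;> [exact (gf_nonneg hS k).1; exact (gf_nonneg hS k).2]
  -- rewrite qTotal
  have hq : qTotal S N = ∑ k ∈ Finset.Icc 1 N, ∑ s ∈ Finset.Icc 1 S,
      ((N.choose k : ℤ) * ((k:ℤ) * phi S s k) - (N.choose k : ℤ) * (((k:ℤ) * phi S s k) / N)) := by
    unfold qTotal
    apply Finset.sum_congr rfl; intro k _
    apply Finset.sum_congr rfl; intro s _
    rw [psi_eq S N s k hN0]; ring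
  have hsplit : qTotal S N =
      (∑ k ∈ Finset.Icc 1 N, ∑ s ∈ Finset.Icc 1 S, (N.choose k : ℤ) * ((k:ℤ) * phi S s k))
      - ∑ k ∈ Finset.Icc 1 N, ∑ s ∈ Finset.Icc 1 S, (N.choose k : ℤ) * (((k:ℤ) * phi S s k) / N) := by
    rw [hq, ← Finset.sum_sub_distrib]
    apply Finset.sum_congr rfl; intro k _
    rw [← Finset.sum_sub_distrib]
  have hmain : (∑ k ∈ Finset.Icc 1 N, ∑ s ∈ Finset.Icc 1 S, (N.choose k : ℤ) * ((k:ℤ) * phi S s k))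
      = (N : ℤ) * (S : ℤ) ^ (N - 1) := by
    have step : ∀ k ∈ Finset.Icc 1 N, ∑ s ∈ Finset.Icc 1 S, (N.choose k : ℤ) * ((k:ℤ) * phi S s k)
        = (N.choose k : ℤ) * k * ((S:ℤ)-1)^(k-1) := by
      intro k hk
      simp only [Finset.mem_Icc] at hk
      rw [← Finset.mul_sum, ← Finset.mul_sum, phi_sum S k hS]
      have hk1 : k - 1 + 1 = k := by omega
      have := gf_sum (S := S) (k - 1)
      rw [hk1] at this
      unfold g f
      rw [this]
      ring
    rw [Finset.sum_congr rfl step, binom_deriv N (by omega) ((S:ℤ)-1)]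
    have : (S:ℤ) - 1 + 1 = S := by ring
    rw [this]
  rw [hsplit, hmain]
  have : (N : ℤ) * (S : ℤ) ^ (N - 1) - ((N : ℤ) * (S : ℤ) ^ (N - 1) -
      ∑ k ∈ Finset.Icc 1 N, ∑ s ∈ Finset.Icc 1 S, (N.choose k : ℤ) * (((k:ℤ) * phi S s k) / N))
      = ∑ k ∈ Finset.Icc 1 N, ∑ s ∈ Finset.Icc 1 S, (N.choose k : ℤ) * (((k:ℤ) * phi S s k) / N) := by
    ring
  rw [this]
  apply Finset.sum_pos'
  · intro k _
    apply Finset.sum_nonneg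
    intro s _
    apply mul_nonneg (by positivity)
    exact Int.ediv_nonneg (mul_nonneg (by positivity) (hphi_nonneg s k)) (by positivity)
  · refine ⟨N, by simp [Finset.mem_Icc]; omega, ?_⟩
    have hNne : (N : ℤ) ≠ 0 := by exact_mod_cast (by omega : N ≠ 0)
    have hdiv : ∀ s, ((N:ℤ) * phi S s N) / N = phi S s N := by
      intro s
      exact Int.mul_ediv_cancel_left _ hNne
    have : ∑ s ∈ Finset.Icc 1 S, (N.choose N : ℤ) * (((N:ℤ) * phi S s N) / N)
        = ∑ s ∈ Finset.Icc 1 S, phi S s N := by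
      apply Finset.sum_congr rfl
      intro s _
      rw [hdiv s, Nat.choose_self]
      ring
    rw [this, phi_sum S N hS]
    have hk1 : N - 1 + 1 = N := by omega
    have hgs := gf_sum (S := S) (N - 1)
    rw [hk1] at hgs
    unfold g f
    rw [hgs]
    have : (1:ℤ) ≤ (S:ℤ) - 1 := by
      have : (2:ℤ) ≤ S := by exact_mod_cast hS
      linarith
    positivity
end

section
/- Let S = 2 and let N ≥ 2 be an integer, and let q = Σ_{k=1}^{N} Σ_{s=1}^{S} C(N,k)·ψ_s(S,k). Then q = N·2^{N−1} − 1; in particular N·S^{N−1} − q = 1 > 0. -/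
lemma gfAux_two (k : ℕ) : gfAux 2 (k+1) = (1,0) ∨ gfAux 2 (k+1) = (0,1) := by
  induction k with
  | zero => left; rfl
  | succ n ih =>
    rcases ih with h | h
    · right; show gfAux 2 (n+2) = _; simp [gfAux, h]
    · left; show gfAux 2 (n+2) = _; simp [gfAux, h]

lemma ceil_lt (N k : ℕ) (hk : k < N) :
    ⌈((k : ℚ) * ((N : ℚ) - 1) / (N : ℚ))⌉ = (k : ℤ) := by
  have hN : 0 < N := by omega
  have hN0 : (0:ℚ) < (N:ℚ) := by exact_mod_cast hN
  have hkN : (k:ℚ) < N := by exact_mod_cast hk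
  rw [Int.ceil_eq_iff]
  constructor
  · rw [lt_div_iff₀ hN0]; push_cast; nlinarith
  · rw [div_le_iff₀ hN0]; push_cast; nlinarith

lemma ceil_eq (N : ℕ) (hN : 1 ≤ N) :
    ⌈((N : ℚ) * ((N : ℚ) - 1) / (N : ℚ))⌉ = (N : ℤ) - 1 := by
  have hN0 : ((N:ℚ)) ≠ 0 := by
    have : 0 < N := hN
    positivity
  rw [mul_comm, mul_div_assoc, div_self hN0, mul_one]
  rw [show ((N:ℚ) - 1) = (((N:ℤ) - 1 : ℤ) : ℚ) by push_cast; ring]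
  exact Int.ceil_intCast _

lemma psi_sum (N k : ℕ) :
    ∑ s ∈ Finset.Icc 1 2, psi 2 N s (k+1) = ⌈(((k:ℚ)+1) * ((N : ℚ) - 1) / (N : ℚ))⌉ := by
  have h2 : Finset.Icc 1 2 = ({1, 2} : Finset ℕ) := rfl
  rw [h2, Finset.sum_insert (by decide), Finset.sum_singleton]
  unfold psi phi g f
  rcases gfAux_two k with h | h <;> simp [h, Int.ceil_intCast]

lemma sum_k_choose (m : ℕ) :
    ∑ i ∈ Finset.range (m+1), (m+1).choose (i+1) * (i+1) = (m+1) * 2^m := by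
  calc ∑ i ∈ Finset.range (m+1), (m+1).choose (i+1) * (i+1)
      = ∑ i ∈ Finset.range (m+1), (m+1) * m.choose i :=
        Finset.sum_congr rfl fun i _ => (Nat.add_one_mul_choose_eq m i).symm
    _ = (m+1) * 2^m := by rw [← Finset.mul_sum, Nat.sum_range_choose]

theorem q_S_eq_two (N : ℕ) (hN : 2 ≤ N) :
    qTotal 2 N = (N : ℤ) * 2 ^ (N - 1) - 1 ∧
    (N : ℤ) * 2 ^ (N - 1) - qTotal 2 N = 1 ∧
    0 < (N : ℤ) * 2 ^ (N - 1) - qTotal 2 N := by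
  obtain ⟨m, rfl⟩ : ∃ m, N = m + 2 := ⟨N - 2, by omega⟩
  have key : qTotal 2 (m+2) = ((m:ℤ)+2) * 2 ^ (m+1) - 1 := by
    unfold qTotal
    rw [show Finset.Icc 1 (m+2) = Finset.Ico 1 (m+3) by rfl]
    rw [Finset.sum_Ico_eq_sum_range]
    simp only [show m + 3 - 1 = m + 2 from rfl]
    have hterm : ∀ i, ∑ s ∈ Finset.Icc 1 2, ((m+2).choose (1+i) : ℤ) * psi 2 (m+2) s (1+i)
        = ((m+2).choose (i+1) : ℤ) * ⌈(((i:ℚ)+1) * (((m:ℚ)+2) - 1) / ((m:ℚ)+2))⌉ := by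
      intro i
      rw [← Finset.mul_sum, add_comm 1 i, psi_sum (m+2) i]
      push_cast
      ring_nf
    rw [Finset.sum_congr rfl fun i _ => hterm i, Finset.sum_range_succ]
    have hmid : ∀ i ∈ Finset.range (m+1),
        ((m+2).choose (i+1) : ℤ) * ⌈(((i:ℚ)+1) * (((m:ℚ)+2) - 1) / ((m:ℚ)+2))⌉
        = ((m+2).choose (i+1) : ℤ) * ((i:ℤ)+1) := by
      intro i hi
      rw [Finset.mem_range] at hi
      have h := ceil_lt (m+2) (i+1) (by omega)
      push_cast at h
      rw [h]
    rw [Finset.sum_congr rfl hmid]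
    have hlast : ⌈(((((m+1):ℕ):ℚ)+1) * (((m:ℚ)+2) - 1) / ((m:ℚ)+2))⌉ = (m:ℤ)+1 := by
      have h := ceil_eq (m+2) (by omega)
      push_cast at h ⊢
      rw [show ((m:ℚ)+1+1) = ((m:ℚ)+2) from by ring, h]
      ring
    rw [hlast, Nat.choose_self]
    have hsum : ∑ i ∈ Finset.range (m+1), ((m+2).choose (i+1) : ℤ) * ((i:ℤ)+1)
        = ((m:ℤ)+2) * 2^(m+1) - ((m:ℤ)+2) := by
      have h2 := sum_k_choose (m+1)
      rw [Finset.sum_range_succ, Nat.choose_self] at h2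
      have h3 : (∑ i ∈ Finset.range (m+1), ((m+2).choose (i+1) : ℤ) * ((i:ℤ)+1))
          = ((∑ i ∈ Finset.range (m+1), (m+2).choose (i+1) * (i+1) : ℕ) : ℤ) := by
        rw [Nat.cast_sum]
        exact Finset.sum_congr rfl fun i _ => by push_cast; ring
      rw [h3]
      simp only [show m+1+1 = m+2 from rfl] at h2
      have h4 : (∑ i ∈ Finset.range (m+1), (m+2).choose (i+1) * (i+1)) = (m+2) * 2^(m+1) - (m+2) := by
        omega
      rw [h4]
      have h5 : m + 2 ≤ (m+2) * 2^(m+1) := Nat.le_mul_of_pos_right _ (Nat.pow_pos (by norm_num))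
      push_cast [Nat.cast_sub h5]
      ring
    rw [hsum]
    push_cast
    ring
  refine ⟨?_, ?_, ?_⟩ <;> rw [show m + 2 - 1 = m + 1 from rfl, key] <;> push_cast <;> ring_nf
  norm_num
end
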